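/- Let G be a connected simple graph on n vertices, m edges, with minimum degree δ and maximum degree Δ. Then the graph energy satisfies E(G) ≤ √(2mn) - n√δ·σ_t(G)/(4(n²Δ² + 4m²)). -/

import Mathlib

open Finset

noncomputable def sigmaT {V : Type*} [Fintype V] (G : SimpleGraph V) [DecidableRel G.Adj] : ℝ :=
  (∑ u : V, ∑ v : V, ((G.degree u : ℝ) - (G.degree v : ℝ)) ^ 2) / 2

/-- The energy of a graph: the sum of the absolute values of the eigenvalues of its
adjacency matrix. -/
noncomputable def graphEnergy {V : Type*} [Fintype V] [DecidableEq V] (G : SimpleGraph V)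
    [DecidableRel G.Adj] (hA : (G.adjMatrix ℝ).IsHermitian) : ℝ :=
  ∑ i, |hA.eigenvalues i|

open Matrix in
lemma energy_le_sum_sqrt_degree {V : Type*} [Fintype V] [DecidableEq V] (G : SimpleGraph V)
    [DecidableRel G.Adj] (hA : (G.adjMatrix ℝ).IsHermitian) :
    ∑ i, |hA.eigenvalues i| ≤ ∑ u, Real.sqrt (G.degree u) := by
  classical
  set U : Matrix V V ℝ := (hA.eigenvectorUnitary : Matrix V V ℝ) with hU
  have hUst : U * star U = 1 := (Matrix.mem_unitaryGroup_iff).mp hA.eigenvectorUnitary.2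
  have hstU : star U * U = 1 := (Matrix.mem_unitaryGroup_iff').mp hA.eigenvectorUnitary.2
  have hrow : ∀ u : V, ∑ i, (U u i) ^ 2 = 1 := by
    intro u
    have h := congrFun (congrFun hUst u) u
    simp only [Matrix.mul_apply, Matrix.star_apply, star_trivial, Matrix.one_apply_eq] at h
    simpa [pow_two] using h
  have hcol : ∀ i : V, ∑ u, (U u i) ^ 2 = 1 := by
    intro i
    have h := congrFun (congrFun hstU i) i
    simp only [Matrix.mul_apply, Matrix.star_apply, star_trivial, Matrix.one_apply_eq] at h
    simpa [pow_two, mul_comm] using h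
  have hAA : G.adjMatrix ℝ * G.adjMatrix ℝ
      = U * Matrix.diagonal (fun i => hA.eigenvalues i ^ 2) * star U := by
    have hsp : G.adjMatrix ℝ
        = U * Matrix.diagonal (RCLike.ofReal ∘ hA.eigenvalues) * star U := hA.spectral_theorem
    have hof : (RCLike.ofReal ∘ hA.eigenvalues : V → ℝ) = hA.eigenvalues := by
      funext i; simp [RCLike.ofReal]
    rw [hof] at hsp
    calc G.adjMatrix ℝ * G.adjMatrix ℝ
        = (U * Matrix.diagonal hA.eigenvalues * star U)
          * (U * Matrix.diagonal hA.eigenvalues * star U) := by rw [← hsp]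
      _ = U * (Matrix.diagonal hA.eigenvalues * ((star U * U)
            * (Matrix.diagonal hA.eigenvalues * star U))) := by
          simp only [Matrix.mul_assoc]
      _ = U * Matrix.diagonal (fun i => hA.eigenvalues i ^ 2) * star U := by
          rw [hstU, Matrix.one_mul, ← Matrix.mul_assoc (Matrix.diagonal _),
            Matrix.diagonal_mul_diagonal]
          simp only [Matrix.mul_assoc, pow_two]
  have hdeg : ∀ u : V, ∑ i, hA.eigenvalues i ^ 2 * (U u i) ^ 2 = (G.degree u : ℝ) := by
    intro u
    have h := congrFun (congrFun hAA u) u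
    rw [SimpleGraph.adjMatrix_mul_self_apply_self] at h
    rw [h, Matrix.mul_apply]
    refine Finset.sum_congr rfl fun j _ => ?_
    simp only [Matrix.mul_diagonal, Matrix.star_apply, star_trivial]
    ring
  have hCS : ∀ u : V, ∑ i, |hA.eigenvalues i| * (U u i) ^ 2 ≤ Real.sqrt (G.degree u) := by
    intro u
    have hnn : 0 ≤ ∑ i, |hA.eigenvalues i| * (U u i) ^ 2 :=
      Finset.sum_nonneg fun i _ => mul_nonneg (abs_nonneg _) (sq_nonneg _)
    rw [Real.le_sqrt hnn (by positivity)]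
    calc (∑ i, |hA.eigenvalues i| * (U u i) ^ 2) ^ 2
        = (∑ i, |U u i| * (|hA.eigenvalues i| * |U u i|)) ^ 2 := by
          congr 1
          refine Finset.sum_congr rfl fun i _ => ?_
          rw [← sq_abs (U u i)]; ring
      _ ≤ (∑ i, |U u i| ^ 2) * (∑ i, (|hA.eigenvalues i| * |U u i|) ^ 2) :=
          Finset.sum_mul_sq_le_sq_mul_sq _ _ _
      _ = (G.degree u : ℝ) := by
          have h1 : ∑ i, |U u i| ^ 2 = 1 := by simpa [sq_abs] using hrow u
          have h2 : ∑ i, (|hA.eigenvalues i| * |U u i|) ^ 2 = (G.degree u : ℝ) := by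
            rw [← hdeg u]
            refine Finset.sum_congr rfl fun i _ => ?_
            rw [mul_pow, sq_abs, sq_abs]
          rw [h1, h2, one_mul]
  calc ∑ i, |hA.eigenvalues i|
      = ∑ i, |hA.eigenvalues i| * ∑ u, (U u i) ^ 2 := by
        refine Finset.sum_congr rfl fun i _ => ?_
        rw [hcol i, mul_one]
    _ = ∑ u, ∑ i, |hA.eigenvalues i| * (U u i) ^ 2 := by
        simp_rw [Finset.mul_sum]
        exact Finset.sum_comm
    _ ≤ ∑ u, Real.sqrt (G.degree u) := Finset.sum_le_sum fun u _ => hCS u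


set_option maxHeartbeats 1600000 in
theorem stmt13 {V : Type*} [Fintype V] [DecidableEq V] (G : SimpleGraph V)
    [DecidableRel G.Adj] (hA : (G.adjMatrix ℝ).IsHermitian)
    (hconn : G.Connected) (n m Δ δ : ℕ) (hn : n = Fintype.card V)
    (hm : m = G.edgeFinset.card) (hΔ : Δ = G.maxDegree) (hδ : δ = G.minDegree) :
    graphEnergy G hA ≤ Real.sqrt (2 * m * n) -
      (n : ℝ) * Real.sqrt δ * sigmaT G / (4 * ((n : ℝ) ^ 2 * Δ ^ 2 + 4 * m ^ 2)) := by
  classical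
  have hE : graphEnergy G hA ≤ ∑ u, Real.sqrt (G.degree u) :=
    energy_le_sum_sqrt_degree G hA
  have hdegsum : ∑ u : V, (G.degree u : ℝ) = 2 * m := by
    rw [hm, ← Nat.cast_sum, SimpleGraph.sum_degrees_eq_twice_card_edges]
    push_cast; ring
  by_cases hm0 : m = 0
  · -- no edges: all degrees zero
    have hdeg0 : ∀ u : V, G.degree u = 0 := by
      have h0 : ∑ u : V, G.degree u = 0 := by
        have h := SimpleGraph.sum_degrees_eq_twice_card_edges G
        rw [← hm, hm0] at h
        simpa using h
      intro u
      exact Finset.sum_eq_zero_iff.mp h0 u (Finset.mem_univ u)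
    have hσ : sigmaT G = 0 := by
      unfold sigmaT
      simp [hdeg0]
    rw [hσ, hm0]
    have hz : (∑ u, Real.sqrt (G.degree u)) = 0 := by
      refine Finset.sum_eq_zero fun u _ => ?_
      rw [hdeg0 u]; simp
    have h2 : (n : ℝ) * Real.sqrt δ * 0 / (4 * ((n : ℝ) ^ 2 * Δ ^ 2 + 4 * ((0:ℕ):ℝ) ^ 2)) = 0 := by
      simp
    rw [h2, sub_zero]
    exact (hE.trans hz.le).trans (Real.sqrt_nonneg _)
  -- main case
  have hV : Nonempty V := hconn.nonempty
  have hn1 : 1 ≤ n := by rw [hn]; exact Fintype.card_pos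
  have hm1 : 1 ≤ m := Nat.one_le_iff_ne_zero.mpr hm0
  have hNpos : (0:ℝ) < n := by exact_mod_cast hn1
  have hMpos : (0:ℝ) < m := by exact_mod_cast hm1
  set q : ℝ := 2 * m / n with hq
  have hqpos : 0 < q := by positivity
  have hNq : (n : ℝ) * q = 2 * m := by rw [hq]; field_simp
  set s0 : ℝ := Real.sqrt q with hs0
  have hs0pos : 0 < s0 := Real.sqrt_pos.mpr hqpos
  have hs0sq : s0 ^ 2 = q := Real.sq_sqrt hqpos.le
  set d : V → ℝ := fun u => (G.degree u : ℝ) with hd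
  have hdegsum' : ∑ u : V, d u = 2 * m := hdegsum
  have hd0 : ∀ u, 0 ≤ d u := fun u => Nat.cast_nonneg _
  -- degree bounds
  have hdΔ : ∀ u, d u ≤ (Δ : ℝ) := by
    intro u
    have h := G.degree_le_maxDegree u
    rw [← hΔ] at h
    exact Nat.cast_le.mpr h
  have hdδ : ∀ u, (δ : ℝ) ≤ d u := by
    intro u
    have h := G.minDegree_le_degree u
    rw [← hδ] at h
    exact Nat.cast_le.mpr h
  have hΔ0 : (0:ℝ) ≤ (Δ:ℝ) := Nat.cast_nonneg _
  have hqΔ : q ≤ (Δ : ℝ) := by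
    have hsum : (2 : ℝ) * m ≤ n * Δ := by
      rw [← hdegsum']
      calc ∑ u : V, d u ≤ ∑ _u : V, (Δ : ℝ) := Finset.sum_le_sum fun u _ => hdΔ u
        _ = n * Δ := by
            rw [Finset.sum_const, Finset.card_univ, ← hn, nsmul_eq_mul]
    rw [hq, div_le_iff₀ hNpos]
    linarith
  have hδq : (δ : ℝ) ≤ q := by
    have hsum : (n : ℝ) * δ ≤ 2 * m := by
      rw [← hdegsum']
      calc (n:ℝ) * δ = ∑ _u : V, (δ : ℝ) := by
            rw [Finset.sum_const, Finset.card_univ, ← hn, nsmul_eq_mul]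
        _ ≤ ∑ u : V, d u := Finset.sum_le_sum fun u _ => hdδ u
    rw [hq, le_div_iff₀ hNpos]
    linarith
  -- sqrt(2mn) = 2m / s0
  have hsqrt2mn : Real.sqrt (2 * m * n) * s0 = 2 * m := by
    rw [hs0, ← Real.sqrt_mul (by positivity : (0:ℝ) ≤ 2 * (m:ℝ) * n)]
    rw [show (2 * (m:ℝ) * n) * q = (2*(m:ℝ))^2 by rw [hq]; field_simp]
    exact Real.sqrt_sq (by positivity)
  have hs2mn : Real.sqrt (2 * m * n) = 2 * m / s0 := by
    rw [eq_div_iff hs0pos.ne']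
    exact hsqrt2mn
  -- the exact identity: ∑ √d = √(2mn) - W / (2 s0)
  set W : ℝ := ∑ u, (Real.sqrt (d u) - s0) ^ 2 with hWdef
  have hident : ∑ u, Real.sqrt (d u) = Real.sqrt (2 * m * n) - W / (2 * s0) := by
    have hterm : ∀ u : V, Real.sqrt (d u) + (Real.sqrt (d u) - s0) ^ 2 / (2 * s0)
        = (d u + q) / (2 * s0) := by
      intro u
      have h1 : Real.sqrt (d u) ^ 2 = d u := Real.sq_sqrt (hd0 u)
      have h2 : (Real.sqrt (d u) - s0) ^ 2 = d u - 2 * s0 * Real.sqrt (d u) + q := by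
        linear_combination h1 + hs0sq
      rw [h2]
      field_simp
      ring
    have hsum : ∑ u, (Real.sqrt (d u) + (Real.sqrt (d u) - s0) ^ 2 / (2 * s0))
        = Real.sqrt (2 * m * n) := by
      rw [Finset.sum_congr rfl fun u _ => hterm u, ← Finset.sum_div,
        Finset.sum_add_distrib, hdegsum', Finset.sum_const, Finset.card_univ, ← hn,
        nsmul_eq_mul, hNq, hs2mn]
      ring
    rw [← hsum, Finset.sum_add_distrib, ← Finset.sum_div]
    ring
  -- sigmaT = n * ∑ (d u - q)^2
  have hdouble : ∑ u : V, ∑ v : V, ((G.degree u : ℝ) - (G.degree v : ℝ)) ^ 2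
      = 2 * ((n:ℝ) * (∑ u, (d u) ^ 2) - (2 * m) ^ 2) := by
    have e : ∀ u : V, ∑ v : V, ((G.degree u : ℝ) - (G.degree v : ℝ)) ^ 2
        = (n:ℝ) * (d u) ^ 2 - (2 * d u) * (2 * m) + (∑ v, (d v) ^ 2) := by
      intro u
      have e2 : ∀ v : V, ((G.degree u : ℝ) - (G.degree v : ℝ)) ^ 2
          = (d u) ^ 2 - (2 * d u) * (d v) + (d v) ^ 2 := by
        intro v; simp only [hd]; ring
      rw [Finset.sum_congr rfl fun v _ => e2 v, Finset.sum_add_distrib,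
        Finset.sum_sub_distrib, ← Finset.mul_sum, hdegsum', Finset.sum_const,
        Finset.card_univ, ← hn, nsmul_eq_mul]
    rw [Finset.sum_congr rfl fun u _ => e u]
    simp only [Finset.sum_add_distrib, Finset.sum_sub_distrib, ← Finset.mul_sum,
      ← Finset.sum_mul, hdegsum', Finset.sum_const, Finset.card_univ, ← hn,
      nsmul_eq_mul, smul_eq_mul]
    ring
  have hsumq : ∑ u, (d u - q) ^ 2 = (∑ u, (d u) ^ 2) - (2 * q) * (2 * m) + (n:ℝ) * q ^ 2 := by
    have e : ∀ u : V, (d u - q) ^ 2 = (d u) ^ 2 - (2 * q) * d u + q ^ 2 := by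
      intro u; ring
    rw [Finset.sum_congr rfl fun u _ => e u, Finset.sum_add_distrib,
      Finset.sum_sub_distrib, ← Finset.mul_sum, hdegsum', Finset.sum_const,
      Finset.card_univ, ← hn, nsmul_eq_mul]
  have hσsum : sigmaT G = (n:ℝ) * ∑ u, (d u - q) ^ 2 := by
    unfold sigmaT
    rw [hdouble, hsumq]
    linear_combination (2 * (m:ℝ) - (n:ℝ) * q) * hNq
  have hσnn : 0 ≤ sigmaT G := by
    rw [hσsum]
    positivity
  -- W lower bound
  set B : ℝ := (Real.sqrt Δ + s0) ^ 2 with hB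
  have hBpos : 0 < B := by positivity
  have hWlb : sigmaT G / ((n:ℝ) * B) ≤ W := by
    have hterm : ∀ u : V, (d u - q) ^ 2 ≤ (Real.sqrt (d u) - s0) ^ 2 * B := by
      intro u
      have h1 : Real.sqrt (d u) ^ 2 = d u := Real.sq_sqrt (hd0 u)
      have h2 : (Real.sqrt (d u) - s0) * (Real.sqrt (d u) + s0) = d u - q := by
        linear_combination h1 - hs0sq
      have h3 : Real.sqrt (d u) + s0 ≤ Real.sqrt Δ + s0 := by
        have := Real.sqrt_le_sqrt (hdΔ u)
        linarith
      have h4 : 0 ≤ Real.sqrt (d u) + s0 := by positivity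
      calc (d u - q) ^ 2 = (Real.sqrt (d u) - s0) ^ 2 * (Real.sqrt (d u) + s0) ^ 2 := by
            rw [← mul_pow, h2]
        _ ≤ (Real.sqrt (d u) - s0) ^ 2 * B := by
            rw [hB]
            exact mul_le_mul_of_nonneg_left (pow_le_pow_left₀ h4 h3 2) (sq_nonneg _)
    rw [div_le_iff₀ (by positivity)]
    calc sigmaT G = (n:ℝ) * ∑ u, (d u - q) ^ 2 := hσsum
      _ ≤ (n:ℝ) * ∑ u, (Real.sqrt (d u) - s0) ^ 2 * B :=
          mul_le_mul_of_nonneg_left (Finset.sum_le_sum fun u _ => hterm u) hNpos.le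
      _ = W * ((n:ℝ) * B) := by rw [hWdef, ← Finset.sum_mul]; ring
  -- the scalar inequality
  have hscalar : (n:ℝ) * Real.sqrt δ * sigmaT G / (4 * ((n : ℝ) ^ 2 * Δ ^ 2 + 4 * m ^ 2))
      ≤ (sigmaT G / ((n:ℝ) * B)) / (2 * s0) := by
    have hδs : Real.sqrt δ * s0 ≤ q := by
      have h1 : Real.sqrt δ ≤ s0 := by
        rw [hs0]; exact Real.sqrt_le_sqrt hδq
      calc Real.sqrt δ * s0 ≤ s0 * s0 := mul_le_mul_of_nonneg_right h1 hs0pos.le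
        _ = q := by linear_combination hs0sq
    have hBle : B ≤ 2 * Δ + 2 * q := by
      have h1 : Real.sqrt (Δ:ℝ) ^ 2 = (Δ:ℝ) := Real.sq_sqrt hΔ0
      rw [hB]
      nlinarith [sq_nonneg (Real.sqrt (Δ:ℝ) - s0), h1, hs0sq]
    have hKpos : (0:ℝ) < 4 * ((n : ℝ) ^ 2 * Δ ^ 2 + 4 * m ^ 2) := by positivity
    rw [div_div, div_le_div_iff₀ hKpos (by positivity)]
    have h5 : Real.sqrt δ * s0 * B ≤ q * (2 * Δ + 2 * q) :=
      mul_le_mul hδs hBle hBpos.le hqpos.le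
    have hmain : (n:ℝ) ^ 2 * (Real.sqrt δ * s0) * B * 2
        ≤ 4 * ((n : ℝ) ^ 2 * Δ ^ 2 + 4 * m ^ 2) := by
      calc (n:ℝ) ^ 2 * (Real.sqrt δ * s0) * B * 2
          = (Real.sqrt δ * s0 * B) * (2 * (n:ℝ) ^ 2) := by ring
        _ ≤ (q * (2 * Δ + 2 * q)) * (2 * (n:ℝ) ^ 2) :=
            mul_le_mul_of_nonneg_right h5 (by positivity)
        _ = 4 * ((n:ℝ) ^ 2 * (q * Δ)) + 4 * ((n:ℝ) * q) ^ 2 := by ring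
        _ ≤ 4 * ((n : ℝ) ^ 2 * Δ ^ 2 + 4 * m ^ 2) := by
            rw [hNq]
            have h6 : q * Δ ≤ (Δ:ℝ) ^ 2 := by nlinarith
            nlinarith [mul_le_mul_of_nonneg_left h6 (sq_nonneg (n:ℝ))]
    calc (n:ℝ) * Real.sqrt δ * sigmaT G * ((n:ℝ) * B * (2 * s0))
        = sigmaT G * ((n:ℝ) ^ 2 * (Real.sqrt δ * s0) * B * 2) := by ring
      _ ≤ sigmaT G * (4 * ((n : ℝ) ^ 2 * Δ ^ 2 + 4 * m ^ 2)) :=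
          mul_le_mul_of_nonneg_left hmain hσnn
  -- assemble
  have hWs : (sigmaT G / ((n:ℝ) * B)) / (2 * s0) ≤ W / (2 * s0) :=
    div_le_div_of_nonneg_right hWlb (by positivity)
  calc graphEnergy G hA ≤ ∑ u, Real.sqrt (d u) := hE
    _ = Real.sqrt (2 * m * n) - W / (2 * s0) := hident
    _ ≤ Real.sqrt (2 * m * n) -
        (n : ℝ) * Real.sqrt δ * sigmaT G / (4 * ((n : ℝ) ^ 2 * Δ ^ 2 + 4 * m ^ 2)) := by
        have h7 := le_trans hscalar hWs
        linarith
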